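/- If there exists a linear k-uniform hypergraph H with n vertices and m hyperedges such that m/n ≥ 2^k, then there exists an unsatisfiable linear k-CNF formula with m clauses. -/

import Mathlib

abbrev Var := ℕ
abbrev Lit := Var × Bool
abbrev Clause := Finset Lit
abbrev CNF := Finset Clause

/-- A clause is valid if it does not contain a variable together with its negation. -/
def Clause.valid (C : Clause) : Prop := ∀ x : Var, ¬(((x, true) ∈ C) ∧ ((x, false) ∈ C))

/-- The set of variables of a clause. -/
def vbl (C : Clause) : Finset Var := C.image Prod.fst

/-- A `k`-CNF formula: every clause is valid and has exactly `k` literals. -/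
def IsKCNF (k : ℕ) (F : CNF) : Prop := ∀ C ∈ F, Clause.valid C ∧ C.card = k

/-- A CNF formula is linear if any two distinct clauses share at most one variable. -/
def LinearCNF (F : CNF) : Prop := ∀ C ∈ F, ∀ D ∈ F, C ≠ D → (vbl C ∩ vbl D).card ≤ 1

/-- A CNF formula is weakly linear if any two distinct clauses share at most one literal. -/
def WeaklyLinear (F : CNF) : Prop := ∀ C ∈ F, ∀ D ∈ F, C ≠ D → (C ∩ D).card ≤ 1

/-- An assignment satisfies a formula if every clause contains a true literal. -/
def Satisfies (α : Var → Bool) (F : CNF) : Prop := ∀ C ∈ F, ∃ l ∈ C, α l.1 = l.2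

def Unsat (F : CNF) : Prop := ¬ ∃ α, Satisfies α F
/-- A hypergraph (given by its edge set) is linear if any two distinct hyperedges
intersect in at most one vertex. -/
def HypLinear (E : Finset (Finset ℕ)) : Prop := ∀ e ∈ E, ∀ f ∈ E, e ≠ f → (e ∩ f).card ≤ 1

/-- A hypergraph is `k`-uniform if every hyperedge has exactly `k` vertices. -/
def KUniform (k : ℕ) (E : Finset (Finset ℕ)) : Prop := ∀ e ∈ E, e.card = k

/-- If there is a linear `k`-uniform hypergraph with `n` vertices and `m`
hyperedges such that `m/n ≥ 2^k`, then there is an unsatisfiable linear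
`k`-CNF formula with `m` clauses. -/

lemma key_ineq (k n m : ℕ) (hn : 1 ≤ n) (hm : 2 ^ k * n ≤ m) :
    2 ^ n * (2 ^ k - 1) ^ m < (2 ^ k) ^ m := by
  rcases Nat.eq_zero_or_pos k with hk | hk
  · subst hk
    have hm1 : 1 ≤ m := le_trans (by simpa using hn) hm
    simp [zero_pow (by omega : m ≠ 0)]
  · have h1 : (1:ℕ) ≤ 2^k := Nat.one_le_two_pow
    rw [← Nat.cast_lt (α := ℝ)]
    push_cast [h1]
    set t : ℝ := (2:ℝ)^k with ht
    have ht2 : (2:ℝ) ≤ t := by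
      calc (2:ℝ) = 2^1 := by norm_num
      _ ≤ 2^k := by apply pow_le_pow_right₀ (by norm_num) hk
    have ht0 : (0:ℝ) < t := by linarith
    have step1 : t - 1 ≤ t * Real.exp (-(1/t)) := by
      have h := Real.add_one_le_exp (-(1/t))
      have : t * (-(1/t) + 1) ≤ t * Real.exp (-(1/t)) :=
        mul_le_mul_of_nonneg_left h (le_of_lt ht0)
      calc t - 1 = t * (-(1/t) + 1) := by field_simp; ring
        _ ≤ _ := this
    have step2 : (t-1)^m ≤ (t * Real.exp (-(1/t)))^m :=
      pow_le_pow_left₀ (by linarith) step1 m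
    have step3 : (t * Real.exp (-(1/t)))^m = t^m * Real.exp (-((m:ℝ)/t)) := by
      rw [mul_pow, ← Real.exp_nat_mul]
      ring_nf
    have step4 : Real.exp (-((m:ℝ)/t)) ≤ Real.exp (-(n:ℝ)) := by
      apply Real.exp_le_exp.mpr
      have : t * (n:ℝ) ≤ (m:ℝ) := by
        have := hm
        calc t * (n:ℝ) = ((2^k * n : ℕ) : ℝ) := by push_cast; ring
          _ ≤ (m:ℝ) := by exact_mod_cast hm
      have : (n:ℝ) ≤ (m:ℝ)/t := (le_div_iff₀ ht0).mpr (by linarith)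
      linarith
    have step5 : (2:ℝ)^n * Real.exp (-(n:ℝ)) < 1 := by
      have he : (2:ℝ) * Real.exp (-1) < 1 := by
        have h2e : (2:ℝ) < Real.exp 1 := by
          have := Real.exp_one_gt_d9
          linarith
        rw [Real.exp_neg]
        rw [mul_inv_lt_iff₀ (Real.exp_pos 1)]
        linarith
      have hrw : (2:ℝ)^n * Real.exp (-(n:ℝ)) = ((2:ℝ) * Real.exp (-1))^n := by
        rw [mul_pow, ← Real.exp_nat_mul]
        norm_num
      rw [hrw]
      exact pow_lt_one₀ (by positivity) he (by omega)
    have htm : (0:ℝ) < t^m := by positivity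
    calc (2:ℝ)^n * (t-1)^m ≤ (2:ℝ)^n * (t^m * Real.exp (-((m:ℝ)/t))) := by
          apply mul_le_mul_of_nonneg_left (step3 ▸ step2) (by positivity)
      _ ≤ (2:ℝ)^n * (t^m * Real.exp (-(n:ℝ))) := by
          apply mul_le_mul_of_nonneg_left (mul_le_mul_of_nonneg_left step4 (le_of_lt htm)) (by positivity)
      _ = t^m * ((2:ℝ)^n * Real.exp (-(n:ℝ))) := by ring
      _ < t^m * 1 := by exact mul_lt_mul_of_pos_left step5 htm
      _ = t^m := by ring

section Aux
variable {E : Finset (Finset ℕ)}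

/-- The clause assigned to edge `e` by the sign pattern `σ`. -/
def clauseOf (σ : ∀ e : ↥E, (↥(e.1 : Finset ℕ) → Bool)) (e : ↥E) : Clause :=
  (e.1).attach.image (fun v => (v.1, σ e v))

def formulaOf (σ : ∀ e : ↥E, (↥(e.1 : Finset ℕ) → Bool)) : CNF :=
  Finset.univ.image (fun e : ↥E => clauseOf σ e)

lemma vbl_clauseOf (σ : ∀ e : ↥E, (↥(e.1 : Finset ℕ) → Bool)) (e : ↥E) :
    vbl (clauseOf σ e) = e.1 := by
  unfold vbl clauseOf
  rw [Finset.image_image]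
  exact Finset.attach_image_val

lemma mem_clauseOf {σ : ∀ e : ↥E, (↥(e.1 : Finset ℕ) → Bool)} {e : ↥E} {x : ℕ} {b : Bool} :
    (x, b) ∈ clauseOf σ e ↔ ∃ h : x ∈ e.1, σ e ⟨x, h⟩ = b := by
  unfold clauseOf
  simp only [Finset.mem_image, Finset.mem_attach, true_and, Prod.mk.injEq]
  constructor
  · rintro ⟨⟨v, hv⟩, rfl, rfl⟩; exact ⟨hv, rfl⟩
  · rintro ⟨h, rfl⟩; exact ⟨⟨x, h⟩, rfl, rfl⟩

lemma valid_clauseOf (σ : ∀ e : ↥E, (↥(e.1 : Finset ℕ) → Bool)) (e : ↥E) :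
    Clause.valid (clauseOf σ e) := by
  intro x ⟨h1, h2⟩
  rw [mem_clauseOf] at h1 h2
  obtain ⟨hx, hb1⟩ := h1
  obtain ⟨hx', hb2⟩ := h2
  rw [show (⟨x, hx'⟩ : ↥(e.1:Finset ℕ)) = ⟨x, hx⟩ from rfl] at hb2
  rw [hb1] at hb2
  exact Bool.noConfusion hb2

lemma card_clauseOf (σ : ∀ e : ↥E, (↥(e.1 : Finset ℕ) → Bool)) (e : ↥E) :
    (clauseOf σ e).card = e.1.card := by
  unfold clauseOf
  rw [Finset.card_image_of_injective _ (fun v w h => Subtype.ext (congrArg Prod.fst h))]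
  simp

lemma clauseOf_injective (σ : ∀ e : ↥E, (↥(e.1 : Finset ℕ) → Bool)) :
    Function.Injective (clauseOf σ) := by
  intro e f h
  have := congrArg vbl h
  rw [vbl_clauseOf, vbl_clauseOf] at this
  exact Subtype.ext this

lemma card_formulaOf (σ : ∀ e : ↥E, (↥(e.1 : Finset ℕ) → Bool)) :
    (formulaOf σ).card = E.card := by
  unfold formulaOf
  rw [Finset.card_image_of_injective _ (clauseOf_injective σ)]
  simp

end Aux

theorem stmt0 (k n m : ℕ) (V : Finset ℕ) (E : Finset (Finset ℕ))
    (hVE : ∀ e ∈ E, e ⊆ V) (hV : V.card = n) (hE : E.card = m)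
    (hunif : KUniform k E) (hlin : HypLinear E)
    (hdense : (2 : ℝ) ^ k ≤ (m : ℝ) / (n : ℝ)) :
    ∃ F : CNF, IsKCNF k F ∧ LinearCNF F ∧ Unsat F ∧ F.card = m := by
  classical
  -- basic numeric facts
  have hn : 1 ≤ n := by
    by_contra h
    have hn0 : n = 0 := by omega
    rw [hn0] at hdense
    simp at hdense
    have : (0:ℝ) < 2 ^ k := by positivity
    linarith
  have hm : 2 ^ k * n ≤ m := by
    have hnR : (0:ℝ) < (n:ℝ) := by exact_mod_cast hn
    have : (2:ℝ) ^ k * (n:ℝ) ≤ (m:ℝ) := by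
      rw [← le_div_iff₀ hnR]; exact hdense
    exact_mod_cast this
  have hkey : 2 ^ n * (2 ^ k - 1) ^ m < (2 ^ k) ^ m := key_ineq k n m hn hm
  -- the type of sign patterns
  have hcardS : Fintype.card (∀ e : ↥E, (↥(e.1 : Finset ℕ) → Bool)) = (2 ^ k) ^ m := by
    rw [Fintype.card_pi]
    have : ∀ e : ↥E, Fintype.card (↥(e.1 : Finset ℕ) → Bool) = 2 ^ k := by
      intro e
      rw [Fintype.card_fun, Fintype.card_bool, Fintype.card_coe, hunif e.1 e.2]
    rw [Finset.prod_congr rfl (fun e _ => this e), Finset.prod_const,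
      Finset.card_univ, Fintype.card_coe, hE]
  -- bad patterns
  set T : (↥V → Bool) → ∀ e : ↥E, (↥(e.1 : Finset ℕ) → Bool) := fun a e v => !(a ⟨v.1, hVE e.1 e.2 v.2⟩) with hT
  set Sat : Finset (∀ e : ↥E, (↥(e.1 : Finset ℕ) → Bool)) := Finset.univ.filter (fun σ => ∃ α, Satisfies α (formulaOf σ)) with hSat
  have hsub : Sat ⊆ Finset.univ.biUnion
      (fun a : ↥V → Bool => Fintype.piFinset (fun e : ↥E => Finset.univ.erase (T a e))) := by
    intro σ hσ
    rw [hSat, Finset.mem_filter] at hσ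
    obtain ⟨-, α, hα⟩ := hσ
    rw [Finset.mem_biUnion]
    refine ⟨fun v => α v.1, Finset.mem_univ _, ?_⟩
    rw [Fintype.mem_piFinset]
    intro e
    rw [Finset.mem_erase]
    refine ⟨?_, Finset.mem_univ _⟩
    intro heq
    obtain ⟨l, hl, hαl⟩ := hα (clauseOf σ e) (Finset.mem_image_of_mem _ (Finset.mem_univ e))
    obtain ⟨x, b⟩ := l
    rw [mem_clauseOf] at hl
    obtain ⟨hx, hb⟩ := hl
    rw [heq] at hb
    simp only [hT] at hb
    simp only at hαl
    rw [← hb] at hαl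
    simp at hαl
  have hcardSat : Sat.card < Fintype.card (∀ e : ↥E, (↥(e.1 : Finset ℕ) → Bool)) := by
    calc Sat.card ≤ _ := Finset.card_le_card hsub
      _ ≤ ∑ a : ↥V → Bool, (Fintype.piFinset (fun e : ↥E => Finset.univ.erase (T a e))).card :=
        Finset.card_biUnion_le
      _ = ∑ a : ↥V → Bool, (2 ^ k - 1) ^ m := by
        apply Finset.sum_congr rfl
        intro a _
        rw [Fintype.card_piFinset]
        have : ∀ e : ↥E, (Finset.univ.erase (T a e)).card = 2 ^ k - 1 := by
          intro e
          rw [Finset.card_erase_of_mem (Finset.mem_univ _), Finset.card_univ,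
            Fintype.card_fun, Fintype.card_bool, Fintype.card_coe, hunif e.1 e.2]
        rw [Finset.prod_congr rfl (fun e _ => this e), Finset.prod_const,
          Finset.card_univ, Fintype.card_coe, hE]
      _ = 2 ^ n * (2 ^ k - 1) ^ m := by
        rw [Finset.sum_const, Finset.card_univ, Fintype.card_fun, Fintype.card_bool,
          Fintype.card_coe, hV, smul_eq_mul]
      _ < (2 ^ k) ^ m := hkey
      _ = Fintype.card (∀ e : ↥E, (↥(e.1 : Finset ℕ) → Bool)) := hcardS.symm
  have : ∃ σ : (∀ e : ↥E, (↥(e.1 : Finset ℕ) → Bool)), σ ∉ Sat := by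
    by_contra h
    push_neg at h
    have : Sat = Finset.univ := Finset.eq_univ_iff_forall.mpr h
    rw [this, Finset.card_univ] at hcardSat
    exact lt_irrefl _ hcardSat
  obtain ⟨σ, hσ⟩ := this
  refine ⟨formulaOf σ, ?_, ?_, ?_, ?_⟩
  · intro C hC
    obtain ⟨e, -, rfl⟩ := Finset.mem_image.mp hC
    exact ⟨valid_clauseOf σ e, by rw [card_clauseOf, hunif e.1 e.2]⟩
  · intro C hC D hD hCD
    obtain ⟨e, -, rfl⟩ := Finset.mem_image.mp hC
    obtain ⟨f, -, rfl⟩ := Finset.mem_image.mp hD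
    rw [vbl_clauseOf, vbl_clauseOf]
    apply hlin e.1 e.2 f.1 f.2
    intro heq
    exact hCD (congrArg (clauseOf σ) (Subtype.ext heq))
  · intro hex
    apply hσ
    rw [hSat, Finset.mem_filter]
    exact ⟨Finset.mem_univ _, hex⟩
  · rw [card_formulaOf, hE]
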